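/- For any n×n complex Hermitian positive semidefinite matrices A, B, C, the following submodularity-type inequality for log-determinants holds: lndet(I + A + B + C) + lndet(I + C) ≤ lndet(I + A + C) + lndet(I + B + C). Equivalently, lndet(I + A + B + C) − lndet(I + B + C) ≤ lndet(I + A + C) − lndet(I + C); adding interference B to the background noise can only decrease the rate increment contributed by A. -/

import Mathlib

open Matrix
open scoped ComplexOrder

namespace LndetSubmodularAux

variable {n : ℕ}

/-- For PSD `K`, `1 ≤ det (1 + K)` in the complex order. -/
lemma one_le_det_one_add {K : Matrix (Fin n) (Fin n) ℂ} (hK : K.PosSemidef) :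
    (1 : ℂ) ≤ (1 + K).det := by
  have hH : K.IsHermitian := hK.1
  set U : Matrix (Fin n) (Fin n) ℂ := (hH.eigenvectorUnitary : Matrix (Fin n) (Fin n) ℂ) with hU
  set D : Matrix (Fin n) (Fin n) ℂ := Matrix.diagonal (RCLike.ofReal ∘ hH.eigenvalues) with hD
  have hU1 : U * star U = 1 := Matrix.mem_unitaryGroup_iff.mp hH.eigenvectorUnitary.2
  have hspec : K = U * D * star U := hH.spectral_theorem
  have hone : (1 : Matrix (Fin n) (Fin n) ℂ) = U * 1 * star U := by
    rw [mul_one, hU1]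
  have hfact : 1 + K = U * (1 + D) * star U := by
    rw [mul_add, add_mul, ← hone, ← hspec]
  have hdet : (1 + K).det = (1 + D).det := by
    calc (1 + K).det = U.det * (1 + D).det * (star U).det := by
          rw [hfact, det_mul, det_mul]
      _ = (U * star U).det * (1 + D).det := by rw [det_mul]; ring
      _ = (1 + D).det := by rw [hU1, det_one, one_mul]
  have hdiag : (1 : Matrix (Fin n) (Fin n) ℂ) + D
      = Matrix.diagonal (fun i => 1 + (hH.eigenvalues i : ℂ)) := by
    rw [hD, ← Matrix.diagonal_one, Matrix.diagonal_add]
    rfl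
  rw [hdet, hdiag, det_diagonal]
  have hcast : (∏ i, (1 + (hH.eigenvalues i : ℂ))) = ((∏ i, (1 + hH.eigenvalues i) : ℝ) : ℂ) := by
    push_cast
    rfl
  rw [hcast]
  have h1 : (1 : ℝ) ≤ ∏ i, (1 + hH.eigenvalues i) := by
    have hp := Finset.prod_le_prod (s := Finset.univ) (f := fun _ : Fin n => (1 : ℝ))
      (g := fun i => 1 + hH.eigenvalues i) (fun i _ => zero_le_one)
      (fun i _ => le_add_of_nonneg_right (hK.eigenvalues_nonneg i))
    simpa using hp
  calc (1 : ℂ) = ((1 : ℝ) : ℂ) := by norm_num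
    _ ≤ ((∏ i, (1 + hH.eigenvalues i) : ℝ) : ℂ) := Complex.real_le_real.mpr h1

open scoped MatrixOrder in
/-- Determinant is monotone under adding a PSD matrix to a PD matrix. -/
lemma det_le_det_add {M E : Matrix (Fin n) (Fin n) ℂ} (hM : M.PosDef) (hE : E.PosSemidef) :
    M.det ≤ (M + E).det := by
  set S := CFC.sqrt M with hSdef
  have hS : S.PosSemidef := (CFC.sqrt_nonneg M).posSemidef
  have hSS : S * S = M := CFC.sqrt_mul_sqrt_self M hM.posSemidef.nonneg
  have hMdet : (0 : ℂ) < M.det := hM.det_pos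
  have hdetS : M.det = S.det * S.det := by rw [← hSS, det_mul]
  have hSu : IsUnit S.det := by
    refine (Ne.isUnit ?_)
    intro h
    rw [hdetS, h, mul_zero] at hMdet
    exact lt_irrefl _ hMdet
  have hSinvH : S⁻¹ᴴ = S⁻¹ := by
    rw [conjTranspose_nonsing_inv, hS.isHermitian.eq]
  set K := S⁻¹ * E * S⁻¹ with hKdef
  have hK : K.PosSemidef := by
    have h := hE.conjTranspose_mul_mul_same (B := S⁻¹)
    rwa [hSinvH] at h
  have hfact : M + E = S * (1 + K) * S := by
    rw [mul_add, add_mul, mul_one, hSS, hKdef]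
    congr 1
    symm
    calc S * (S⁻¹ * E * S⁻¹) * S = (S * S⁻¹) * (E * (S⁻¹ * S)) := by
          simp only [Matrix.mul_assoc]
      _ = E := by rw [mul_nonsing_inv _ hSu, nonsing_inv_mul _ hSu, one_mul, mul_one]
  have hdet2 : (M + E).det = M.det * (1 + K).det := by
    rw [hfact, det_mul, det_mul, hdetS]
    ring
  rw [hdet2]
  calc M.det = M.det * 1 := (mul_one _).symm
    _ ≤ M.det * (1 + K).det :=
        mul_le_mul_of_nonneg_left (one_le_det_one_add hK) hMdet.le

/-- Matrix determinant lemma (conjugated form). -/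
lemma det_add_conj {Q : Matrix (Fin n) (Fin n) ℂ} (R : Matrix (Fin n) (Fin n) ℂ)
    (hQ : Q.PosDef) :
    (Q + Rᴴ * R).det = Q.det * (1 + R * Q⁻¹ * Rᴴ).det := by
  have hQu : IsUnit Q.det := (hQ.det_pos.ne').isUnit
  have h1 : Q + Rᴴ * R = Q * (1 + Q⁻¹ * Rᴴ * R) := by
    rw [mul_add, mul_one]
    congr 1
    rw [← Matrix.mul_assoc, ← Matrix.mul_assoc, mul_nonsing_inv _ hQu, one_mul]
  rw [h1, det_mul]
  congr 1
  rw [show R * Q⁻¹ * Rᴴ = R * (Q⁻¹ * Rᴴ) from Matrix.mul_assoc R _ _]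
  exact det_one_add_mul_comm (Q⁻¹ * Rᴴ) R

/-- `P⁻¹ - (P + A)⁻¹` is PSD for `P` positive definite and `A` PSD. -/
lemma inv_sub_inv_psd {P A : Matrix (Fin n) (Fin n) ℂ} (hP : P.PosDef) (hA : A.PosSemidef) :
    (P⁻¹ - (P + A)⁻¹).PosSemidef := by
  set Q := P + A with hQdef
  have hQ : Q.PosDef := hP.add_posSemidef hA
  have hPu : IsUnit P.det := (hP.det_pos.ne').isUnit
  have hQu : IsUnit Q.det := (hQ.det_pos.ne').isUnit
  have hAH : Aᴴ = A := hA.isHermitian.eq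
  have hQinvH : Q⁻¹ᴴ = Q⁻¹ := by
    rw [conjTranspose_nonsing_inv, hQ.isHermitian.eq]
  have key : P⁻¹ - Q⁻¹ = Q⁻¹ * A * P⁻¹ := by
    have h1 : Q * (P⁻¹ - Q⁻¹) = A * P⁻¹ := by
      rw [mul_sub, mul_nonsing_inv _ hQu, hQdef, add_mul, mul_nonsing_inv _ hPu]
      abel
    calc P⁻¹ - Q⁻¹ = Q⁻¹ * (Q * (P⁻¹ - Q⁻¹)) := by
          rw [← Matrix.mul_assoc, nonsing_inv_mul _ hQu, one_mul]
      _ = Q⁻¹ * (A * P⁻¹) := by rw [h1]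
      _ = Q⁻¹ * A * P⁻¹ := by rw [Matrix.mul_assoc]
  have hmid : A * P⁻¹ = A * Q⁻¹ + A * P⁻¹ * A * Q⁻¹ := by
    have h2 : A * P⁻¹ * Q = A + A * P⁻¹ * A := by
      rw [hQdef, mul_add, Matrix.mul_assoc A, nonsing_inv_mul _ hPu, mul_one]
    calc A * P⁻¹ = A * P⁻¹ * Q * Q⁻¹ := by
          rw [Matrix.mul_assoc (A * P⁻¹), mul_nonsing_inv _ hQu, mul_one]
      _ = (A + A * P⁻¹ * A) * Q⁻¹ := by rw [h2]
      _ = A * Q⁻¹ + A * P⁻¹ * A * Q⁻¹ := by rw [add_mul]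
  have hform : P⁻¹ - Q⁻¹ = Q⁻¹ᴴ * A * Q⁻¹ + (A * Q⁻¹)ᴴ * P⁻¹ * (A * Q⁻¹) := by
    rw [conjTranspose_mul, hAH, hQinvH, key]
    calc Q⁻¹ * A * P⁻¹ = Q⁻¹ * (A * P⁻¹) := Matrix.mul_assoc _ _ _
      _ = Q⁻¹ * (A * Q⁻¹ + A * P⁻¹ * A * Q⁻¹) := by conv_lhs => rw [hmid]
      _ = Q⁻¹ * A * Q⁻¹ + Q⁻¹ * A * P⁻¹ * (A * Q⁻¹) := by
          rw [mul_add]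
          simp only [Matrix.mul_assoc]
  rw [hform]
  exact (hA.conjTranspose_mul_mul_same (B := Q⁻¹)).add
    ((hP.posSemidef.inv).conjTranspose_mul_mul_same (B := A * Q⁻¹))

open scoped MatrixOrder in
/-- Core submodularity of determinants. -/
lemma det_submodular {P A B : Matrix (Fin n) (Fin n) ℂ}
    (hP : P.PosDef) (hA : A.PosSemidef) (hB : B.PosSemidef) :
    (P + A + B).det * P.det ≤ (P + A).det * (P + B).det := by
  obtain ⟨R, hR⟩ : ∃ R : Matrix (Fin n) (Fin n) ℂ, B = Rᴴ * R :=
    ⟨CFC.sqrt B, by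
      rw [(CFC.sqrt_nonneg B).posSemidef.isHermitian.eq, CFC.sqrt_mul_sqrt_self B hB.nonneg]⟩
  subst hR
  have hQ : (P + A).PosDef := hP.add_posSemidef hA
  have hd1 : (P + A + Rᴴ * R).det = (P + A).det * (1 + R * (P + A)⁻¹ * Rᴴ).det :=
    det_add_conj R hQ
  have hd2 : (P + Rᴴ * R).det = P.det * (1 + R * P⁻¹ * Rᴴ).det := det_add_conj R hP
  set X := R * (P + A)⁻¹ * Rᴴ with hXdef
  set Y := R * P⁻¹ * Rᴴ with hYdef
  have hX : X.PosSemidef := (hQ.posSemidef.inv).mul_mul_conjTranspose_same R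
  have hD : (Y - X).PosSemidef := by
    have hident : Y - X = R * (P⁻¹ - (P + A)⁻¹) * Rᴴ := by
      rw [hXdef, hYdef, Matrix.mul_sub, Matrix.sub_mul]
    rw [hident]
    exact (inv_sub_inv_psd hP hA).mul_mul_conjTranspose_same R
  have h1X : (1 + X).PosDef := Matrix.PosDef.one.add_posSemidef hX
  have hstep : (1 + X).det ≤ (1 + Y).det := by
    have := det_le_det_add h1X hD
    have heq : 1 + X + (Y - X) = 1 + Y := by abel
    rwa [heq] at this
  rw [hd1, hd2]
  have hPQpos : (0 : ℂ) < (P + A).det * P.det := mul_pos hQ.det_pos hP.det_pos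
  calc (P + A).det * (1 + X).det * P.det = (P + A).det * P.det * (1 + X).det := by ring
    _ ≤ (P + A).det * P.det * (1 + Y).det :=
        mul_le_mul_of_nonneg_left hstep hPQpos.le
    _ = (P + A).det * (P.det * (1 + Y).det) := by ring

end LndetSubmodularAux

/-- Submodularity of log-determinant: for Hermitian PSD A, B, C,
lndet(I+A+B+C) + lndet(I+C) ≤ lndet(I+A+C) + lndet(I+B+C). -/
theorem lndet_submodular {n : ℕ} (A B C : Matrix (Fin n) (Fin n) ℂ)
    (hA : A.PosSemidef) (hB : B.PosSemidef) (hC : C.PosSemidef) :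
    Real.log ((1 + A + B + C).det.re) + Real.log ((1 + C).det.re) ≤
      Real.log ((1 + A + C).det.re) + Real.log ((1 + B + C).det.re) := by
  have hP : (1 + C : Matrix (Fin n) (Fin n) ℂ).PosDef := Matrix.PosDef.one.add_posSemidef hC
  have key := LndetSubmodularAux.det_submodular hP hA hB
  have e1 : (1 + C) + A + B = 1 + A + B + C := by abel
  have e2 : (1 + C) + A = 1 + A + C := by abel
  have e3 : (1 + C) + B = 1 + B + C := by abel
  rw [e1, e2, e3] at key
  have h1 : (0 : ℂ) < (1 + A + B + C).det := by
    have : (1 + A + B + C : Matrix (Fin n) (Fin n) ℂ).PosDef := by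
      have := Matrix.PosDef.one.add_posSemidef ((hA.add hB).add hC)
      have e : (1 : Matrix (Fin n) (Fin n) ℂ) + (A + B + C) = 1 + A + B + C := by abel
      rwa [e] at this
    exact this.det_pos
  have h2 : (0 : ℂ) < (1 + C).det := hP.det_pos
  have h3 : (0 : ℂ) < (1 + A + C).det := by
    have : (1 + A + C : Matrix (Fin n) (Fin n) ℂ).PosDef := by
      have := Matrix.PosDef.one.add_posSemidef (hA.add hC)
      have e : (1 : Matrix (Fin n) (Fin n) ℂ) + (A + C) = 1 + A + C := by abel
      rwa [e] at this
    exact this.det_pos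
  have h4 : (0 : ℂ) < (1 + B + C).det := by
    have : (1 + B + C : Matrix (Fin n) (Fin n) ℂ).PosDef := by
      have := Matrix.PosDef.one.add_posSemidef (hB.add hC)
      have e : (1 : Matrix (Fin n) (Fin n) ℂ) + (B + C) = 1 + B + C := by abel
      rwa [e] at this
    exact this.det_pos
  have im1 : (1 + A + B + C).det.im = 0 := ((Complex.lt_def.mp h1).2).symm
  have im2 : (1 + C).det.im = 0 := ((Complex.lt_def.mp h2).2).symm
  have im3 : (1 + A + C).det.im = 0 := ((Complex.lt_def.mp h3).2).symm
  have im4 : (1 + B + C).det.im = 0 := ((Complex.lt_def.mp h4).2).symm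
  have re1 : (0 : ℝ) < (1 + A + B + C).det.re := (Complex.lt_def.mp h1).1
  have re2 : (0 : ℝ) < (1 + C).det.re := (Complex.lt_def.mp h2).1
  have re3 : (0 : ℝ) < (1 + A + C).det.re := (Complex.lt_def.mp h3).1
  have re4 : (0 : ℝ) < (1 + B + C).det.re := (Complex.lt_def.mp h4).1
  have hre : (1 + A + B + C).det.re * (1 + C).det.re ≤
      (1 + A + C).det.re * (1 + B + C).det.re := by
    have := (Complex.le_def.mp key).1
    simpa [Complex.mul_re, im1, im2, im3, im4] using this
  calc Real.log ((1 + A + B + C).det.re) + Real.log ((1 + C).det.re)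
      = Real.log ((1 + A + B + C).det.re * (1 + C).det.re) :=
        (Real.log_mul re1.ne' re2.ne').symm
    _ ≤ Real.log ((1 + A + C).det.re * (1 + B + C).det.re) :=
        Real.log_le_log (mul_pos re1 re2) hre
    _ = Real.log ((1 + A + C).det.re) + Real.log ((1 + B + C).det.re) :=
        Real.log_mul re3.ne' re4.ne'
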